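/- Let N ≥ 1 and let Λ ⊂ ℕ^N be a finite, nonempty, downward-closed (lower) set with M := #Λ. Then M ≤ ∑_{ν ∈ Λ} ∏_{n=1}^N (2 ν_n + 1) ≤ M². (The middle quantity is Z(Λ) = ∑_{ν∈Λ} ‖L_ν‖_{L^∞}² for the L²-normalized tensor-product Legendre polynomials on [−1,1]^N, since ‖L_ν‖_{L^∞}² = ∏_n (2ν_n+1).) -/

import Mathlib

/-- For a finite, nonempty, downward-closed set `Λ ⊂ ℕ^N`
with `M = #Λ`, one has `M ≤ ∑_{ν ∈ Λ} ∏_n (2 ν_n + 1) ≤ M²`.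
(The middle quantity is `Z(Λ)` for L²-normalized Legendre polynomials.) -/
theorem stmt_3 (N : ℕ) (hN : 1 ≤ N) (Λ : Finset (Fin N → ℕ)) (hne : Λ.Nonempty)
    (hdc : ∀ ν ∈ Λ, ∀ μ : Fin N → ℕ, (∀ n, μ n ≤ ν n) → μ ∈ Λ) :
    Λ.card ≤ ∑ ν ∈ Λ, ∏ n, (2 * ν n + 1) ∧
    ∑ ν ∈ Λ, ∏ n, (2 * ν n + 1) ≤ Λ.card ^ 2 := by
  constructor
  · calc Λ.card = ∑ _ν ∈ Λ, 1 := Finset.card_eq_sum_ones Λ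
      _ ≤ _ := Finset.sum_le_sum fun ν _ =>
          Nat.one_le_iff_ne_zero.2 (by positivity)
  · have key : ∑ ν ∈ Λ, ∏ n, (2 * ν n + 1)
        = (Λ.sigma fun ν => Fintype.piFinset fun n => Finset.range (2 * ν n + 1)).card := by
      rw [Finset.card_sigma]
      refine Finset.sum_congr rfl fun ν _ => ?_
      rw [Fintype.card_piFinset]
      simp
    rw [key, sq, ← Finset.card_product]
    apply Finset.card_le_card_of_injOn
      (fun p => (fun n => min (p.2 n) (p.1 n), fun n => min (2 * p.1 n - p.2 n) (p.1 n)))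
    · rintro ⟨ν, t⟩ hp
      rw [Finset.mem_coe, Finset.mem_sigma] at hp
      obtain ⟨hν, ht⟩ := hp
      rw [Fintype.mem_piFinset] at ht
      refine Finset.mem_product.2 ⟨?_, ?_⟩
      · exact hdc ν hν _ fun n => min_le_right _ _
      · exact hdc ν hν _ fun n => min_le_right _ _
    · rintro ⟨ν, t⟩ hp ⟨ν', t'⟩ hp' heq
      simp only [Finset.mem_coe, Finset.mem_sigma, Fintype.mem_piFinset] at hp hp'
      have hb : ∀ n, t n ≤ 2 * ν n := fun n => Nat.lt_succ_iff.1 (by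
        simpa using hp.2 n)
      have hb' : ∀ n, t' n ≤ 2 * ν' n := fun n => Nat.lt_succ_iff.1 (by
        simpa using hp'.2 n)
      have h1 := congrArg Prod.fst heq
      have h2 := congrArg Prod.snd heq
      simp only at h1 h2
      have hν : ν = ν' := by
        funext n
        have e1 := congrFun h1 n
        have e2 := congrFun h2 n
        have := hb n; have := hb' n
        clear heq h1 h2 hp hp' key hdc hne hb hb'
        omega
      subst hν
      have ht : t = t' := by
        funext n
        have e1 := congrFun h1 n
        have e2 := congrFun h2 n
        have := hb n; have := hb' n
        clear heq h1 h2 hp hp' key hdc hne hb hb'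
        omega
      subst ht
      rfl
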